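/- If d is a quasi κ-metric on a compact Hausdorff space Y and X is a dense subspace of Y, then d_X(x, cl_X(U)) := d(x, cl_Y(U)) for x ∈ X and U open in X defines a quasi κ-metric on X. -/

import Mathlib

open Topology

universe u

/-- A quasi κ-metric on a space `Y`: a nonnegative function `ρ(y, C)` of a point and a
canonically closed set, satisfying axioms K1*, K2, K3, K4. -/
structure QuasiKappaMetric (Y : Type u) [TopologicalSpace Y] where
  ρ : Y → Set Y → ℝ
  nonneg : ∀ (y : Y) (C : Set Y), 0 ≤ ρ y C
  k1star : ∀ C : Set Y, C = closure (interior C) →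
    ∃ V : Set Y, IsOpen V ∧ V ⊆ Cᶜ ∧ Cᶜ ⊆ closure V ∧ ∀ y, ρ y C = 0 ↔ y ∉ V
  k2 : ∀ (y : Y) (C C' : Set Y), C = closure (interior C) → C' = closure (interior C') →
    C ⊆ C' → ρ y C' ≤ ρ y C
  k3 : ∀ C : Set Y, C = closure (interior C) → Continuous fun y => ρ y C
  k4 : ∀ (ι : Type u) [LinearOrder ι] [Nonempty ι] (C : ι → Set Y),
    (∀ i, C i = closure (interior (C i))) → Monotone C →
    ∀ y, ρ y (closure (⋃ i, C i)) = ⨅ i, ρ y (C i)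

section Helpers
open Set

variable {Y : Type u} [TopologicalSpace Y] {X : Set Y}

lemma qkm_cl_sub (S : Set ↥X) :
    closure S = Subtype.val ⁻¹' closure (Subtype.val '' S) :=
  IsEmbedding.subtypeVal.closure_eq_preimage_closure_image S

lemma qkm_canon (hX : Dense X) {W : Set ↥X} (hW : IsOpen W) :
    closure (Subtype.val '' W) = closure (interior (closure (Subtype.val '' W))) := by
  obtain ⟨O, hO, rfl⟩ := isOpen_induced_iff.mp hW
  have himg : Subtype.val '' (Subtype.val ⁻¹' O : Set ↥X) = X ∩ O :=
    Subtype.image_preimage_coe X O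
  rw [himg]
  have h1 : closure (X ∩ O) = closure O :=
    subset_antisymm (closure_mono inter_subset_right)
      (closure_minimal (by simpa [Set.inter_comm] using hX.open_subset_closure_inter hO) isClosed_closure)
  rw [h1]
  exact subset_antisymm
    (closure_mono (interior_maximal subset_closure hO))
    (closure_minimal interior_subset isClosed_closure)

lemma qkm_sub_F {C : Set ↥X} (hC : C = closure (interior C)) :
    Subtype.val '' C ⊆ closure (Subtype.val '' interior C) := by
  conv_lhs => rw [hC, qkm_cl_sub]
  exact Set.image_preimage_subset _ _

lemma qkm_cl_trace (hX : Dense X) {O : Set Y} (hO : IsOpen O) :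
    closure ((Subtype.val ⁻¹' O : Set ↥X)) = Subtype.val ⁻¹' closure O := by
  rw [qkm_cl_sub, Subtype.image_preimage_coe]
  refine congrArg _ ?_
  exact subset_antisymm (closure_mono inter_subset_right)
    (closure_minimal (by simpa [Set.inter_comm] using hX.open_subset_closure_inter hO)
      isClosed_closure)

lemma qkm_cl_iUnion {ι : Type u} (A : ι → Set Y) :
    closure (⋃ i, closure (A i)) = closure (⋃ i, A i) :=
  subset_antisymm
    (closure_minimal (Set.iUnion_subset fun i => closure_mono (Set.subset_iUnion A i))
      isClosed_closure)
    (closure_mono (Set.iUnion_mono fun _ => subset_closure))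

end Helpers

/-- If `d` is a quasi κ-metric on a compact Hausdorff space `Y` and `X ⊆ Y` is dense,
then `d_X(x, cl_X U) := d(x, cl_Y U)` (for `U` open in `X`) defines a quasi κ-metric
on `X`. -/
theorem quasiKappaMetric_of_dense_subspace {Y : Type u} [TopologicalSpace Y]
    [CompactSpace Y] [T2Space Y] {X : Set Y} (hX : Dense X) (d : QuasiKappaMetric Y) :
    ∃ dX : QuasiKappaMetric ↥X, ∀ (x : ↥X) (U : Set ↥X), IsOpen U →
      dX.ρ x (closure U) = d.ρ (x : Y) (closure (Subtype.val '' U)) := by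
  refine ⟨{ ρ := fun x C => d.ρ (x : Y) (closure (Subtype.val '' interior C))
            nonneg := fun x C => d.nonneg _ _
            k1star := ?_, k2 := ?_, k3 := ?_, k4 := ?_ }, ?_⟩
  · -- K1*
    intro C hC
    obtain ⟨V, hVo, hV1, hV2, hV3⟩ :=
      d.k1star (closure (Subtype.val '' interior C)) (qkm_canon hX isOpen_interior)
    refine ⟨Subtype.val ⁻¹' V, hVo.preimage continuous_subtype_val, ?_, ?_, ?_⟩
    · intro x hx hxC
      exact hV1 hx (qkm_sub_F hC ⟨x, hxC, rfl⟩)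
    · intro x hx
      have hxF : (x : Y) ∉ closure (Subtype.val '' interior C) := by
        intro h
        exact hx (by rw [hC, qkm_cl_sub]; exact h)
      rw [qkm_cl_trace hX hVo]
      exact hV2 hxF
    · intro x
      exact hV3 (x : Y)
  · -- K2
    intro x C C' hC hC' hCC'
    exact d.k2 _ _ _ (qkm_canon hX isOpen_interior) (qkm_canon hX isOpen_interior)
      (closure_mono (Set.image_mono (interior_mono hCC')))
  · -- K3
    intro C hC
    exact (d.k3 _ (qkm_canon hX isOpen_interior)).comp continuous_subtype_val
  · -- K4
    intro ι _ _ C hC hmono x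
    have key : closure (Subtype.val '' interior (closure (⋃ i, C i)))
        = closure (⋃ i, closure (Subtype.val '' interior (C i))) := by
      rw [qkm_cl_iUnion]
      apply subset_antisymm
      · apply closure_minimal _ isClosed_closure
        calc Subtype.val '' interior (closure (⋃ i, C i))
            ⊆ Subtype.val '' closure (⋃ i, C i) := Set.image_mono interior_subset
          _ ⊆ closure (Subtype.val '' ⋃ i, C i) := by
              rw [qkm_cl_sub]; exact Set.image_preimage_subset _ _
          _ = closure (⋃ i, Subtype.val '' C i) := by rw [Set.image_iUnion]
          _ ⊆ closure (⋃ i, closure (Subtype.val '' interior (C i))) :=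
              closure_mono (Set.iUnion_mono fun i => qkm_sub_F (hC i))
          _ = closure (⋃ i, Subtype.val '' interior (C i)) := qkm_cl_iUnion _
      · apply closure_mono
        apply Set.iUnion_subset
        intro i
        apply Set.image_mono
        exact interior_mono ((Set.subset_iUnion C i).trans subset_closure)
    show d.ρ (x : Y) (closure (Subtype.val '' interior (closure (⋃ i, C i))))
        = ⨅ i, d.ρ (x : Y) (closure (Subtype.val '' interior (C i)))
    rw [key]
    exact d.k4 ι (fun i => closure (Subtype.val '' interior (C i)))
      (fun i => qkm_canon hX isOpen_interior)
      (fun i j hij => closure_mono (Set.image_mono (interior_mono (hmono hij)))) x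
  · -- final equality
    intro x U hU
    show d.ρ (x : Y) (closure (Subtype.val '' interior (closure U))) = _
    congr 1
    apply subset_antisymm
    · apply closure_minimal _ isClosed_closure
      calc Subtype.val '' interior (closure U)
          ⊆ Subtype.val '' closure U := Set.image_mono interior_subset
        _ ⊆ closure (Subtype.val '' U) := by
            rw [qkm_cl_sub]; exact Set.image_preimage_subset _ _
    · exact closure_mono (Set.image_mono (interior_maximal subset_closure hU))
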